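/- Consider the profile (m = 5 candidates, k = 4) with vote distribution x[{c2,c4}] = x[{c2,c5}] = 1/3, x[{c1,c2,c3}] = x[{c4,c5}] = 1/6, and 0 otherwise. The 4-committee W = {c1,c3,c4,c5} is not Droop core-stable: for W' = {c2,c4,c5}, the support ∑_{A : |A∩W'| > |A∩W|} x[A] = 2/3 > 3/5 = |W'|/(k+1). -/
import Mathlib


/-- Vote distribution of the running example (candidate `cᵢ` is `i - 1 : Fin 5`). -/
def x10 : Finset (Fin 5) → ℚ := fun A =>
  if A = {1, 3} ∨ A = {1, 4} then 1/3
  else if A = {0, 1, 2} ∨ A = {3, 4} then 1/6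
  else 0

lemma sum10 :
    (∑ A ∈ Finset.univ.filter
        (fun A : Finset (Fin 5) =>
          (A ∩ ({0, 2, 3, 4} : Finset (Fin 5))).card
            < (A ∩ ({1, 3, 4} : Finset (Fin 5))).card), x10 A) = 2/3 := by
  rw [show (Finset.univ.filter
        (fun A : Finset (Fin 5) =>
          (A ∩ ({0, 2, 3, 4} : Finset (Fin 5))).card
            < (A ∩ ({1, 3, 4} : Finset (Fin 5))).card))
      = {({1} : Finset (Fin 5)), {1, 3}, {1, 4}, {1, 3, 4}} from by decide]
  rw [Finset.sum_insert (by decide), Finset.sum_insert (by decide),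
    Finset.sum_insert (by decide), Finset.sum_singleton]
  rw [show x10 {1} = 0 from by unfold x10; rw [if_neg (by decide), if_neg (by decide)],
    show x10 {1,3} = 1/3 from by unfold x10; rw [if_pos (by decide)],
    show x10 {1,4} = 1/3 from by unfold x10; rw [if_pos (by decide)],
    show x10 {1,3,4} = 0 from by unfold x10; rw [if_neg (by decide), if_neg (by decide)]]
  norm_num

/-- for `k = 4`, the committee `W = {c1,c3,c4,c5}` is not Droop
core-stable: the deviation `W' = {c2,c4,c5}` has support `2/3 > 3/5`. -/
theorem stmt10 :
    (∑ A ∈ Finset.univ.filter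
        (fun A : Finset (Fin 5) =>
          (A ∩ ({0, 2, 3, 4} : Finset (Fin 5))).card
            < (A ∩ ({1, 3, 4} : Finset (Fin 5))).card), x10 A) = 2/3 ∧
    (2 : ℚ)/3 > 3/5 ∧
    ¬ (∀ W' : Finset (Fin 5), W'.Nonempty → W'.card ≤ 4 →
        (∑ A ∈ Finset.univ.filter
            (fun A : Finset (Fin 5) =>
              (A ∩ ({0, 2, 3, 4} : Finset (Fin 5))).card < (A ∩ W').card), x10 A)
          ≤ (W'.card : ℚ) / 5) := by
  refine ⟨sum10, by norm_num, fun h => ?_⟩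
  have := h ({1, 3, 4} : Finset (Fin 5)) (by decide) (by decide)
  rw [sum10, show ({1, 3, 4} : Finset (Fin 5)).card = 3 from by decide] at this
  norm_num at this
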